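/- Let p and q be integers with 0 < p < q, and let BS(q,p) be the Baumslag–Solitar group with generators a, b. For every integer k ≥ 1, the word lengths with respect to the generating set {a, b} satisfy ‖a^{qk}‖ ≤ q + 1 + ‖a^{q·⌊pk/q⌋}‖. -/

import Mathlib

/-- The word length of `g` with respect to a generating set `S`:
the smallest `n` such that `g` is a product of `n` elements of `S ∪ S⁻¹`. -/
noncomputable def wordLength {G : Type*} [Group G] (S : Set G) (g : G) : ℕ :=
  sInf {n : ℕ | ∃ w : List G, w.length = n ∧ (∀ x ∈ w, x ∈ S ∨ x⁻¹ ∈ S) ∧ w.prod = g}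

/-- The Baumslag–Solitar group `BS(q,p) = ⟨a, b ∣ a^q = b a^p b⁻¹⟩`. -/
abbrev BaumslagSolitar (q p : ℤ) : Type :=
  PresentedGroup
    ({FreeGroup.of true ^ q *
        (FreeGroup.of false * FreeGroup.of true ^ p * (FreeGroup.of false)⁻¹)⁻¹} :
      Set (FreeGroup Bool))

/-- The generator `a` of `BS(q,p)`. -/
noncomputable def BSa (q p : ℤ) : BaumslagSolitar q p := PresentedGroup.of true

/-- The generator `b` of `BS(q,p)`. -/
noncomputable def BSb (q p : ℤ) : BaumslagSolitar q p := PresentedGroup.of false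

lemma BS_rel (q p : ℤ) :
    (BSa q p) ^ q = BSb q p * (BSa q p) ^ p * (BSb q p)⁻¹ := by
  have h1 : (PresentedGroup.mk _ (FreeGroup.of true ^ q *
      (FreeGroup.of false * FreeGroup.of true ^ p * (FreeGroup.of false)⁻¹)⁻¹) :
      BaumslagSolitar q p) = 1 := by
    apply (QuotientGroup.eq_one_iff _).mpr
    exact Subgroup.subset_normalClosure (Set.mem_singleton _)
  have := h1
  rw [map_mul, map_inv, map_mul, map_mul, map_inv, map_zpow, map_zpow] at this
  have h2 := mul_eq_one_iff_eq_inv.mp this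
  rw [inv_inv] at h2
  exact h2

lemma wordLength_le_of_word {G : Type*} [Group G] (S : Set G) (g : G)
    (w : List G) (hw : ∀ x ∈ w, x ∈ S ∨ x⁻¹ ∈ S) (hprod : w.prod = g) :
    wordLength S g ≤ w.length := Nat.sInf_le ⟨w, rfl, hw, hprod⟩


/-- In `BS(q,p)` with `0 < p < q`, for every `k ≥ 1` one has
`‖a^{qk}‖ ≤ q + 1 + ‖a^{q·⌊pk/q⌋}‖`. -/
theorem BS_a_word_length_recursion (p q : ℤ) (hp : 0 < p) (hpq : p < q)
    (k : ℤ) (hk : 1 ≤ k) :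
    (wordLength ({BSa q p, BSb q p} : Set (BaumslagSolitar q p)) ((BSa q p) ^ (q * k)) : ℤ) ≤
      q + 1 +
        wordLength ({BSa q p, BSb q p} : Set (BaumslagSolitar q p))
          ((BSa q p) ^ (q * (p * k / q))) := by
  set a := BSa q p
  set b := BSb q p
  set S : Set (BaumslagSolitar q p) := {a, b}
  have hq : 0 < q := hp.trans hpq
  set m : ℤ := p * k / q with hm
  set r : ℤ := p * k % q with hr
  have hr0 : 0 ≤ r := Int.emod_nonneg _ hq.ne'
  have hrq : r < q := Int.emod_lt_of_pos _ hq
  have hm0 : 0 ≤ m := Int.ediv_nonneg (by positivity) hq.le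
  -- the set for a^(q*m) is nonempty
  have hne : {n : ℕ | ∃ w : List (BaumslagSolitar q p),
      w.length = n ∧ (∀ x ∈ w, x ∈ S ∨ x⁻¹ ∈ S) ∧ w.prod = a ^ (q * m)}.Nonempty := by
    refine ⟨(q * m).toNat, List.replicate (q * m).toNat a, List.length_replicate, ?_, ?_⟩
    · intro x hx
      rw [List.eq_of_mem_replicate hx]
      exact Or.inl (Or.inl rfl)
    · rw [List.prod_replicate, ← zpow_natCast, Int.toNat_of_nonneg (by positivity)]
  obtain ⟨w, hwlen, hwS, hwprod⟩ := Nat.sInf_mem hne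
  have hL : wordLength S (a ^ (q * m)) = w.length := hwlen.symm
  -- the key identity
  have hkey : a ^ (q * k) = b * (w.prod * ((List.replicate r.toNat a).prod * b⁻¹)) := by
    rw [hwprod, List.prod_replicate, ← zpow_natCast, Int.toNat_of_nonneg hr0]
    rw [zpow_mul, BS_rel, conj_zpow, ← zpow_mul, mul_comm p k,
      show k * p = q * m + r from by rw [mul_comm k p, hm, hr]; exact (Int.mul_ediv_add_emod (p * k) q).symm,
      zpow_add]
    group
    rfl
  -- word length bound
  have hle : wordLength S (a ^ (q * k)) ≤
      (b :: (w ++ (List.replicate r.toNat a ++ [b⁻¹]))).length := by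
    apply wordLength_le_of_word
    · intro x hx
      simp only [List.mem_cons, List.mem_append, List.mem_singleton] at hx
      rcases hx with h | h | h | h | h
      · exact Or.inl (h ▸ Or.inr rfl)
      · exact hwS x h
      · rw [List.eq_of_mem_replicate h]; exact Or.inl (Or.inl rfl)
      · rw [h, inv_inv]; exact Or.inr (Or.inr rfl)
      · exact absurd h List.not_mem_nil
    · simpa [List.prod_cons, List.prod_append, mul_assoc] using hkey.symm
  have hlen : ((b :: (w ++ (List.replicate r.toNat a ++ [b⁻¹]))).length : ℤ)
      = w.length + r + 2 := by
    simp [List.length_append, List.length_replicate, Int.toNat_of_nonneg hr0]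
    ring
  calc (wordLength S (a ^ (q * k)) : ℤ)
      ≤ ((b :: (w ++ (List.replicate r.toNat a ++ [b⁻¹]))).length : ℤ) := by exact_mod_cast hle
    _ = w.length + r + 2 := hlen
    _ ≤ q + 1 + wordLength S (a ^ (q * m)) := by
        rw [hL]; linarith
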